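/- Let S be a numerical semigroup admitting a pattern p with leading coefficient a₁ ≥ 2 (p not monic) and admissibility degree at least 3, and let E be a semigroup ideal of S. Then S ⋈ᵈ E admits p eventually with respect to d. -/

import Mathlib

/-- A numerical semigroup: an additive submonoid of ℕ with finite complement. -/
def IsNumericalSemigroup (S : Set ℕ) : Prop :=
  0 ∈ S ∧ (∀ a ∈ S, ∀ b ∈ S, a + b ∈ S) ∧ Sᶜ.Finite

/-- Evaluation of a pattern (list of coefficients a₁,…,aₙ) at s₁,…,sₙ. -/
def patEval (p : List ℤ) (s : ℕ → ℕ) : ℤ :=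
  ∑ i ∈ Finset.range p.length, p.getD i 0 * (s i : ℤ)

/-- `S` admits the pattern `p`: p(s₁,…,sₙ) ∈ S for all s₁ ≥ ⋯ ≥ sₙ in S. -/
def AdmitsPat (S : Set ℕ) (p : List ℤ) : Prop :=
  ∀ s : ℕ → ℕ, (∀ i, s i ∈ S) → (∀ i j, i ≤ j → s j ≤ s i) →
    ∃ m ∈ S, (m : ℤ) = patEval p s

/-- A pattern is admissible if it is admitted by some numerical semigroup. -/
def Admissible (p : List ℤ) : Prop :=
  ∃ S : Set ℕ, IsNumericalSemigroup S ∧ AdmitsPat S p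

/-- The derivative p' of a pattern. -/
def pderiv : List ℤ → List ℤ
  | [] => []
  | a :: q => if a = 1 then q else (a - 1) :: q

/-- The admissibility degree: least k such that p⁽ᵏ⁾ is not admissible, or ∞. -/
noncomputable def adDeg (p : List ℤ) : ℕ∞ :=
  sInf ((fun m : ℕ => (m : ℕ∞)) '' {m : ℕ | ¬ Admissible (pderiv^[m] p)})

/-- The partial sum bᵢ = a₁ + ⋯ + aᵢ of the coefficients of `p`. -/
def psum (p : List ℤ) (i : ℕ) : ℤ :=
  ∑ j ∈ Finset.range i, p.getD j 0

/-- The numerical duplication S ⋈ᵈ E = 2·S ∪ (2·E + d). -/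
def numDup (S E : Set ℕ) (d : ℕ) : Set ℕ :=
  {x | ∃ s ∈ S, x = 2 * s} ∪ {x | ∃ e ∈ E, x = 2 * e + d}

/-- S ⋈ᵈ E admits p eventually with respect to d. -/
def EventuallyAdmits (S E : Set ℕ) (p : List ℤ) : Prop :=
  ∃ d' : ℕ, ∀ d : ℕ, d ∈ S → Odd d → d' ≤ d → AdmitsPat (numDup S E d) p

/-- The relative ideal E − E = {z ∈ ℤ : z + E ⊆ E}. -/
def EmE (E : Set ℕ) : Set ℤ :=
  {z : ℤ | ∀ e ∈ E, ∃ f ∈ E, (f : ℤ) = z + (e : ℤ)}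

/-- The conductor c(E) = min{x ∈ ℕ : x + ℕ ⊆ E}. -/
noncomputable def condOf (E : Set ℕ) : ℕ :=
  sInf {c : ℕ | ∀ x : ℕ, c ≤ x → x ∈ E}

lemma psum_cons (b : ℤ) (q : List ℤ) (i : ℕ) : psum (b :: q) (i+1) = psum q i + b := by
  unfold psum
  rw [Finset.sum_range_succ']
  simp

lemma admissible_psum_nonneg {r : List ℤ} (h : Admissible r) {i : ℕ} (hi : i ≤ r.length) :
    0 ≤ psum r i := by
  by_contra hneg
  push_neg at hneg
  obtain ⟨S, ⟨h0, _, hfin⟩, hadm⟩ := h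
  have hSinf : S.Infinite := by
    have := hfin.infinite_compl
    rwa [compl_compl] at this
  obtain ⟨M, hMS, hM0⟩ := (hSinf.diff (Set.finite_singleton 0)).nonempty
  simp only [Set.mem_singleton_iff] at hM0
  set s : ℕ → ℕ := fun j => if j < i then M else 0 with hs
  have hs1 : ∀ j, s j ∈ S := by
    intro j; simp only [hs]; split_ifs; exacts [hMS, h0]
  have hs2 : ∀ j k, j ≤ k → s k ≤ s j := by
    intro j k hjk; simp only [hs]; split_ifs <;> omega
  obtain ⟨m, _, hm⟩ := hadm s hs1 hs2
  have heval : patEval r s = psum r i * M := by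
    unfold patEval psum
    rw [Finset.sum_mul]
    rw [← Finset.sum_subset (Finset.range_subset_range.mpr hi)]
    · apply Finset.sum_congr rfl
      intro j hj
      have hji := Finset.mem_range.mp hj
      simp [hs, hji]
    · intro j _ hjnot
      have : ¬ j < i := by simpa using hjnot
      simp [hs, this]
  have hMpos : (0:ℤ) < (M:ℤ) := by exact_mod_cast Nat.pos_of_ne_zero hM0
  have := mul_neg_of_neg_of_pos hneg hMpos
  have hm0 : (0:ℤ) ≤ (m:ℤ) := Int.ofNat_nonneg m
  rw [heval] at hm
  linarith

lemma psum_ge_two (p : List ℤ) (hnm : 2 ≤ p.getD 0 0) (hdeg : 3 ≤ adDeg p) :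
    ∀ i < p.length, 2 ≤ psum p (i+1) := by
  have hadm : ∀ m, m < 3 → Admissible (pderiv^[m] p) := by
    intro m hm
    by_contra h
    have hmem : (m : ℕ∞) ∈ (fun m : ℕ => (m : ℕ∞)) '' {m : ℕ | ¬ Admissible (pderiv^[m] p)} :=
      ⟨m, h, rfl⟩
    have h1 : adDeg p ≤ (m : ℕ∞) := sInf_le hmem
    have h2 : (3:ℕ∞) ≤ (m:ℕ∞) := le_trans hdeg h1
    have : (3:ℕ) ≤ m := by exact_mod_cast h2
    omega
  cases p with
  | nil => simp [List.getD] at hnm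
  | cons a q =>
    simp only [List.getD_cons_zero] at hnm
    have hd1 : pderiv (a :: q) = (a-1) :: q := by
      rw [show pderiv (a :: q) = if a = 1 then q else (a-1) :: q from rfl,
        if_neg (by omega : ¬ a = 1)]
    have hq2 : Admissible (pderiv^[2] (a :: q)) := hadm 2 (by omega)
    have hit : pderiv^[2] (a :: q) = pderiv ((a-1) :: q) := by
      have : pderiv^[2] (a :: q) = pderiv (pderiv (a :: q)) := rfl
      rw [this, hd1]
    rw [hit] at hq2
    have key : ∀ i ≤ q.length, 2 - a ≤ psum q i := by
      intro i hi
      by_cases ha2 : a - 1 = 1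
      · have : pderiv ((a-1) :: q) = q := by
          rw [show pderiv ((a-1) :: q) = if a - 1 = 1 then q else (a-1-1) :: q from rfl,
            if_pos ha2]
        rw [this] at hq2
        have := admissible_psum_nonneg hq2 hi
        omega
      · have : pderiv ((a-1) :: q) = (a-1-1) :: q := by
          rw [show pderiv ((a-1) :: q) = if a - 1 = 1 then q else (a-1-1) :: q from rfl,
            if_neg ha2]
        rw [this] at hq2
        have h3 := admissible_psum_nonneg hq2 (by simp; omega : i + 1 ≤ ((a-1-1) :: q).length)
        rw [psum_cons] at h3
        omega
    intro i hi
    simp only [List.length_cons] at hi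
    rw [psum_cons]
    have := key i (by omega)
    omega

lemma patEval_ge (p : List ℤ) (hp : p ≠ [])
    (hb : ∀ i < p.length, 2 ≤ psum p (i+1))
    (t : ℕ → ℕ) (hmono : ∀ i j, i ≤ j → t j ≤ t i) :
    2 * (t 0 : ℤ) ≤ patEval p t := by
  set n := p.length with hn
  have hn1 : 1 ≤ n := List.length_pos_iff.mpr hp
  set g : ℕ → ℤ := fun i => if i < n then (t i : ℤ) else 0 with hg
  have hgmono : ∀ i, g (i+1) ≤ g i := by
    intro i
    have := hmono i (i+1) (Nat.le_succ i)
    simp only [hg]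
    split_ifs <;> omega
  have key : patEval p t = ∑ i ∈ Finset.range n, psum p (i+1) * (g i - g (i+1)) := by
    have expand : ∀ i ∈ Finset.range n,
        psum p (i+1) * (g i - g (i+1)) =
        p.getD i 0 * g i + (psum p i * g i - psum p (i+1) * g (i+1)) := by
      intro i _
      have hstep : psum p (i+1) = psum p i + p.getD i 0 := by
        unfold psum; rw [Finset.sum_range_succ]
      rw [hstep]; ring
    rw [Finset.sum_congr rfl expand, Finset.sum_add_distrib,
      Finset.sum_range_sub' (fun i => psum p i * g i) n]
    have h0 : psum p 0 = 0 := by simp [psum]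
    have hgn : g n = 0 := by simp [hg]
    rw [h0, hgn]
    have hcongr : ∀ i ∈ Finset.range n, p.getD i 0 * g i = p.getD i 0 * (t i : ℤ) := by
      intro i hi
      simp [hg, Finset.mem_range.mp hi]
    rw [Finset.sum_congr rfl hcongr]
    simp [patEval, hn]
  rw [key]
  have lower : ∀ i ∈ Finset.range n, 2 * (g i - g (i+1)) ≤ psum p (i+1) * (g i - g (i+1)) := by
    intro i hi
    exact mul_le_mul_of_nonneg_right (hb i (Finset.mem_range.mp hi)) (by linarith [hgmono i])
  calc 2 * (t 0:ℤ) = ∑ i ∈ Finset.range n, 2 * (g i - g (i+1)) := by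
        rw [← Finset.mul_sum, Finset.sum_range_sub' g n]
        have hg0 : g 0 = (t 0 : ℤ) := by
          simp only [hg]; rw [if_pos (by omega : 0 < n)]
        have hgn : g n = 0 := by
          simp only [hg]; rw [if_neg (lt_irrefl n)]
        rw [hg0, hgn]; ring
    _ ≤ _ := Finset.sum_le_sum lower

/-- If S admits a non-monic pattern p (leading coefficient a₁ ≥ 2) of
admissibility degree at least 3, then S ⋈ᵈ E admits p eventually with
respect to d. -/
theorem stmt_18 (S E : Set ℕ) (hS : IsNumericalSemigroup S)
    (hES : E ⊆ S) (hE : ∀ e ∈ E, ∀ s ∈ S, e + s ∈ E) (hEne : E.Nonempty)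
    (p : List ℤ) (hp : ∀ a ∈ p, a ≠ 0)
    (hnm : 2 ≤ p.getD 0 0) (hdeg : 3 ≤ adDeg p)
    (hSp : AdmitsPat S p) :
    EventuallyAdmits S E p := by
  obtain ⟨h0S, _, hfin⟩ := hS
  -- conductor of S
  obtain ⟨cS, hcS⟩ : ∃ c : ℕ, ∀ x : ℕ, c ≤ x → x ∈ S := by
    obtain ⟨N, hN⟩ := hfin.bddAbove
    refine ⟨N + 1, fun x hx => ?_⟩
    by_contra h
    have := hN h
    omega
  obtain ⟨e₀, he₀⟩ := hEne
  -- conductor of E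
  set c := e₀ + cS with hc
  have hcE : ∀ x : ℕ, c ≤ x → x ∈ E := by
    intro x hx
    have h1 : x - e₀ ∈ S := hcS _ (by omega)
    have := hE e₀ he₀ _ h1
    have hxe : e₀ + (x - e₀) = x := by omega
    rwa [hxe] at this
  have hb := psum_ge_two p hnm hdeg
  have hpne : p ≠ [] := by
    intro h
    rw [h] at hnm
    simp [List.getD] at hnm
  refine ⟨2 * c + 1, fun d hdS hdodd hdge t htT htmono => ?_⟩
  by_cases hA : ∀ i < p.length, ∃ s ∈ S, t i = 2 * s
  · -- all relevant entries even
    set u : ℕ → ℕ := fun i => if i < p.length then t i / 2 else 0 with hu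
    have huS : ∀ i, u i ∈ S := by
      intro i
      simp only [hu]
      split_ifs with h
      · obtain ⟨s, hsS, hts⟩ := hA i h
        rw [hts]
        simpa using hsS
      · exact h0S
    have humono : ∀ i j, i ≤ j → u j ≤ u i := by
      intro i j hij
      simp only [hu]
      split_ifs with h1 h2
      · exact Nat.div_le_div_right (htmono i j hij)
      · omega
      · exact Nat.zero_le _
      · exact Nat.zero_le _
    obtain ⟨m, hmS, hm⟩ := hSp u huS humono
    refine ⟨2 * m, Or.inl ⟨m, hmS, rfl⟩, ?_⟩
    have h2 : patEval p t = 2 * patEval p u := by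
      unfold patEval
      rw [Finset.mul_sum]
      apply Finset.sum_congr rfl
      intro i hi
      have hilen := Finset.mem_range.mp hi
      obtain ⟨s, hsS, hts⟩ := hA i hilen
      have hui : u i = s := by simp [hu, hilen, hts]
      rw [hts, hui]
      push_cast
      ring
    rw [h2, ← hm]
    push_cast
    ring
  · -- some entry is of the form 2e + d, so t 0 ≥ d
    push_neg at hA
    obtain ⟨i₀, hi₀, hodd⟩ := hA
    have htd : d ≤ t i₀ := by
      rcases htT i₀ with ⟨s, hsS, hts⟩ | ⟨e, _, hte⟩
      · exact absurd hts (hodd s hsS)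
      · omega
    have ht0 : d ≤ t 0 := le_trans htd (htmono 0 i₀ (Nat.zero_le _))
    have hP := patEval_ge p hpne hb t htmono
    set P := patEval p t with hPdef
    have hP2d : 2 * (d:ℤ) ≤ P := by
      have : 2 * (d:ℤ) ≤ 2 * (t 0 : ℤ) := by exact_mod_cast by omega
      linarith
    have hPnn : 0 ≤ P := by
      have : (0:ℤ) ≤ 2 * (d:ℤ) := by positivity
      linarith
    have hPN : ((P.toNat : ℤ)) = P := Int.toNat_of_nonneg hPnn
    set N := P.toNat with hNdef
    have hN2d : 2 * d ≤ N := by omega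
    obtain ⟨l, hl⟩ := hdodd
    rcases Nat.even_or_odd N with ⟨k, hk⟩ | ⟨k, hk⟩
    · refine ⟨N, Or.inl ⟨k, hES (hcE k (by omega)), by omega⟩, hPN⟩
    · refine ⟨N, Or.inr ⟨k - l, hcE (k - l) (by omega), by omega⟩, hPN⟩
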